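/- Every ideal of a commutative ring R that is maximal among weakly annihilated ideals of R (ordered by inclusion) is a prime ideal. -/
import Mathlib


/-- An ideal `I` of a commutative ring is weakly annihilated if for each `a ∈ I` and
`b ∉ I` there exists `c` with `c * a = 0` but `c * b ≠ 0`. -/
def WeaklyAnnihilated {R : Type*} [CommRing R] (I : Ideal R) : Prop :=
  ∀ a ∈ I, ∀ b ∉ I, ∃ c : R, c * a = 0 ∧ c * b ≠ 0

/-- Every ideal maximal among (proper) weakly annihilated ideals is prime. -/
theorem stmt1 {R : Type*} [CommRing R] (I : Ideal R)
    (hI : WeaklyAnnihilated I) (hproper : I ≠ ⊤)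
    (hmax : ∀ J : Ideal R, WeaklyAnnihilated J → J ≠ ⊤ → I ≤ J → J = I) :
    I.IsPrime := by
  refine ⟨hproper, ?_⟩
  intro x y hxy
  by_contra h
  push_neg at h
  obtain ⟨hx, hy⟩ := h
  -- J = (I : y)
  let J : Ideal R :=
  { carrier := {r | r * y ∈ I}
    add_mem' := fun {a b} ha hb => by
      simpa [add_mul] using I.add_mem ha hb
    zero_mem' := by simp
    smul_mem' := fun c a ha => by
      simpa [smul_eq_mul, mul_assoc] using I.mul_mem_left c ha }
  have memJ : ∀ r : R, r ∈ J ↔ r * y ∈ I := fun r => Iff.rfl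
  have hxJ : x ∈ J := (memJ x).mpr hxy
  have hle : I ≤ J := fun i hi => (memJ i).mpr (I.mul_mem_right y hi)
  have hJtop : J ≠ ⊤ := by
    intro htop
    have : (1 : R) ∈ J := htop ▸ Submodule.mem_top
    exact hy (by simpa using (memJ 1).mp this)
  have hJWA : WeaklyAnnihilated J := by
    intro a ha b hb
    have hb' : b * y ∉ I := fun h' => hb ((memJ b).mpr h')
    obtain ⟨c, hc1, hc2⟩ := hI (a * y) ((memJ a).mp ha) (b * y) hb'
    refine ⟨c * y, ?_, ?_⟩
    · calc c * y * a = c * (a * y) := by ring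
      _ = 0 := hc1
    · intro h0
      exact hc2 (by calc c * (b * y) = c * y * b := by ring
        _ = 0 := h0)
  have := hmax J hJWA hJtop hle
  exact hx (this ▸ hxJ)
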